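/- Let X be a real Banach space satisfying: for every ε > 0 there exists δ > 0 such that for every f ∈ S(X*) there exists x ∈ S(X) with d₁(x, δ) < ε and D(x) ⊆ B(f, ε) (condition (e)). Then every f ∈ S(X*) is uniformly w*-semidenting: for every ε > 0 there exists α > 0 such that for any f ∈ S(X*) there is x ∈ S(X) with S(B(X*), x, α) ⊆ B(f, ε). -/

import Mathlib

open NormedSpace

/-- Condition (e) implies that every norm-one functional is uniformly w*-semidenting. -/
theorem stmt_9 {X : Type*} [NormedAddCommGroup X] [NormedSpace ℝ X] [CompleteSpace X]
    (h : ∀ ε : ℝ, 0 < ε → ∃ δ : ℝ, 0 < δ ∧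
      ∀ f : StrongDual ℝ X, ‖f‖ = 1 → ∃ x : X, ‖x‖ = 1 ∧
        sSup {r : ℝ | ∃ lam : ℝ, ∃ y : X, 0 < lam ∧ lam < δ ∧ ‖y‖ ≤ 1 ∧
          r = (‖x + lam • y‖ + ‖x - lam • y‖ - 2) / lam} < ε ∧
        {g : StrongDual ℝ X | ‖g‖ = 1 ∧ g x = 1} ⊆ Metric.ball f ε) :
    ∀ ε : ℝ, 0 < ε → ∃ α : ℝ, 0 < α ∧
      ∀ f : StrongDual ℝ X, ‖f‖ = 1 → ∃ x : X, ‖x‖ = 1 ∧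
        {g : StrongDual ℝ X | ‖g‖ ≤ 1 ∧ 1 - α < g x} ⊆ Metric.ball f ε := by
  intro ε hε
  obtain ⟨δ, hδ, hδ'⟩ := h (ε / 4) (by linarith)
  refine ⟨δ * ε / 16, by positivity, ?_⟩
  intro f hf
  obtain ⟨x, hx, hsup, hD⟩ := hδ' f hf
  refine ⟨x, hx, ?_⟩
  rintro g ⟨hg1, hg2⟩
  have hx0 : x ≠ 0 := by intro h0; rw [h0] at hx; simp at hx
  obtain ⟨φ, hφ1, hφ2⟩ := exists_dual_vector ℝ x (norm_ne_zero_iff.mpr hx0)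
  rw [hx] at hφ2
  have hφ2' : φ x = 1 := by exact_mod_cast hφ2
  have hφf : φ ∈ Metric.ball f (ε / 4) := hD ⟨hφ1, hφ2'⟩
  set S : Set ℝ := {r : ℝ | ∃ lam : ℝ, ∃ y : X, 0 < lam ∧ lam < δ ∧ ‖y‖ ≤ 1 ∧
      r = (‖x + lam • y‖ + ‖x - lam • y‖ - 2) / lam} with hS
  have hbdd : BddAbove S := by
    refine ⟨2, ?_⟩
    rintro r ⟨lam, y, hl0, hlδ, hy, rfl⟩
    have h1 : ‖x + lam • y‖ ≤ 1 + lam := by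
      calc ‖x + lam • y‖ ≤ ‖x‖ + ‖lam • y‖ := norm_add_le _ _
        _ ≤ 1 + lam := by
            rw [hx, norm_smul, Real.norm_eq_abs, abs_of_pos hl0]
            nlinarith
    have h2 : ‖x - lam • y‖ ≤ 1 + lam := by
      calc ‖x - lam • y‖ ≤ ‖x‖ + ‖lam • y‖ := norm_sub_le _ _
        _ ≤ 1 + lam := by
            rw [hx, norm_smul, Real.norm_eq_abs, abs_of_pos hl0]
            nlinarith
    rw [div_le_iff₀ hl0]
    linarith
  have key : ∀ y : X, ‖y‖ ≤ 1 → g y - φ y ≤ 3 * ε / 8 := by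
    intro y hy
    set lam : ℝ := δ / 2 with hlam
    have hl0 : 0 < lam := by positivity
    have hmem : (‖x + lam • y‖ + ‖x - lam • y‖ - 2) / lam ∈ S :=
      ⟨lam, y, hl0, by simp [hlam]; linarith, hy, rfl⟩
    have hlt : (‖x + lam • y‖ + ‖x - lam • y‖ - 2) / lam < ε / 4 :=
      lt_of_le_of_lt (le_csSup hbdd hmem) hsup
    have hnum : ‖x + lam • y‖ + ‖x - lam • y‖ - 2 < lam * (ε / 4) := by
      rw [div_lt_iff₀ hl0] at hlt
      linarith
    have h1 : g x + lam * g y ≤ ‖x + lam • y‖ := by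
      have := g.le_opNorm (x + lam • y)
      have h' : g (x + lam • y) ≤ ‖g (x + lam • y)‖ := le_abs_self _
      have hn : ‖x + lam • y‖ ≥ 0 := norm_nonneg _
      have : g (x + lam • y) ≤ ‖x + lam • y‖ := by nlinarith
      simpa [map_add, map_smul, smul_eq_mul] using this
    have h2 : 1 - lam * φ y ≤ ‖x - lam • y‖ := by
      have h' : φ (x - lam • y) ≤ ‖φ (x - lam • y)‖ := le_abs_self _
      have := φ.le_opNorm (x - lam • y)
      have : φ (x - lam • y) ≤ ‖x - lam • y‖ := by nlinarith [norm_nonneg (x - lam • y)]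
      rw [map_sub, map_smul, smul_eq_mul, hφ2'] at this
      linarith
    have hgx : 1 - δ * ε / 16 < g x := hg2
    have : lam * (g y - φ y) ≤ lam * (3 * ε / 8) := by
      have : lam * g y - lam * φ y < lam * (ε / 4) + δ * ε / 16 := by linarith
      nlinarith
    nlinarith
  have hnorm : ‖g - φ‖ ≤ 3 * ε / 8 := by
    refine ContinuousLinearMap.opNorm_le_bound _ (by linarith) ?_
    intro y
    rcases eq_or_ne y 0 with rfl | hy0
    · simp
    · have hyn : 0 < ‖y‖ := norm_pos_iff.mpr hy0
      set u : X := ‖y‖⁻¹ • y with hu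
      have hun : ‖u‖ = 1 := by
        rw [hu, norm_smul, Real.norm_eq_abs, abs_of_pos (inv_pos.mpr hyn)]
        field_simp
      have k1 : g u - φ u ≤ 3 * ε / 8 := key u hun.le
      have k2 : g (-u) - φ (-u) ≤ 3 * ε / 8 := key (-u) (by rw [norm_neg, hun])
      rw [map_neg, map_neg] at k2
      have habs : |g u - φ u| ≤ 3 * ε / 8 := abs_le.mpr ⟨by linarith, k1⟩
      have hyu : y = ‖y‖ • u := by
        rw [hu, smul_smul, mul_inv_cancel₀ hyn.ne', one_smul]
      have hdiff : g u - φ u = ‖y‖⁻¹ * (g y - φ y) := by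
        simp [hu, map_smul, smul_eq_mul, mul_sub]
      have heq : g y - φ y = ‖y‖ * (g u - φ u) := by
        rw [hdiff]; field_simp
      calc ‖(g - φ) y‖ = ‖y‖ * |g u - φ u| := by
            rw [ContinuousLinearMap.sub_apply, Real.norm_eq_abs, heq, abs_mul,
              abs_of_pos hyn]
        _ ≤ 3 * ε / 8 * ‖y‖ := by
            rw [mul_comm]
            exact mul_le_mul_of_nonneg_right habs hyn.le
  have hdist : dist g f < ε := by
    calc dist g f ≤ dist g φ + dist φ f := dist_triangle _ _ _
      _ < 3 * ε / 8 + ε / 4 := by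
          have : dist g φ ≤ 3 * ε / 8 := by rw [dist_eq_norm]; exact hnorm
          have hφf' := Metric.mem_ball.mp hφf
          linarith
      _ < ε := by linarith
  exact Metric.mem_ball.mp (Metric.mem_ball.mpr hdist) |> fun _ => Metric.mem_ball.mpr hdist
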